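/- Let (m_n)_{n≥0} be a real sequence with m₀ = 1 and S₀ a nonempty closed subset of ℝ. Define μ on polynomials by μ(∑ x_n u^n) = ∑ x_n m_n. If μ(P) ≥ 0 for every polynomial P with P ≥ 0 on S₀, then there exists a Borel probability measure ρ on ℝ with support contained in S₀ such that m_n = ∫ u^n dρ(u) for all n ≥ 0. -/

import Mathlib

open MeasureTheory Polynomial Set Filter Topology
open scoped ENNReal

namespace ShohatTamarkin

/-- Every polynomial is dominated in absolute value by a polynomial that is
nonnegative everywhere. -/
lemma poly_dominate (p : Polynomial ℝ) :
    ∃ q : Polynomial ℝ, ∀ u : ℝ, |p.eval u| ≤ q.eval u := by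
  refine ⟨∑ i ∈ Finset.range (p.natDegree + 1), Polynomial.C |p.coeff i| * (1 + X ^ (2 * i)),
    fun u => ?_⟩
  rw [Polynomial.eval_eq_sum_range (x := u) (p := p)]
  simp only [eval_finset_sum, eval_mul, eval_C, eval_add, eval_one, eval_pow, eval_X]
  refine (Finset.abs_sum_le_sum_abs _ _).trans (Finset.sum_le_sum fun i _ => ?_)
  rw [abs_mul, abs_pow]
  refine mul_le_mul_of_nonneg_left ?_ (abs_nonneg _)
  have h1 : |u| ^ i ≤ 1 + (|u| ^ i) ^ 2 := by nlinarith [sq_nonneg (|u| ^ i - 1), sq_nonneg (|u|^i)]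
  calc |u| ^ i ≤ 1 + (|u| ^ i) ^ 2 := h1
    _ = 1 + u ^ (2 * i) := by
        rw [← pow_mul, mul_comm i 2, pow_mul, pow_mul, sq_abs]

variable (S₀ : Set ℝ)

/-- The space of functions dominated on `S₀` by a polynomial. -/
def Edom : Submodule ℝ (ℝ → ℝ) where
  carrier := {f | ∃ q : Polynomial ℝ, ∀ u ∈ S₀, |f u| ≤ q.eval u}
  zero_mem' := ⟨0, fun u _ => by simp⟩
  add_mem' := by
    rintro f g ⟨q, hq⟩ ⟨r, hr⟩
    exact ⟨q + r, fun u hu => by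
      simpa using (abs_add_le _ _).trans (add_le_add (hq u hu) (hr u hu))⟩
  smul_mem' := by
    rintro c f ⟨q, hq⟩
    exact ⟨Polynomial.C |c| * q, fun u hu => by
      simp only [Pi.smul_apply, smul_eq_mul, abs_mul, eval_mul, eval_C]
      exact mul_le_mul_of_nonneg_left (hq u hu) (abs_nonneg c)⟩

/-- Make an element of `Edom` from a function and a domination witness. -/
def mkE (f : ℝ → ℝ) (h : ∃ q : Polynomial ℝ, ∀ u ∈ S₀, |f u| ≤ q.eval u) : Edom S₀ :=
  ⟨f, h⟩

@[simp] lemma mkE_coe (f : ℝ → ℝ) (h) (u : ℝ) : (mkE S₀ f h : ℝ → ℝ) u = f u := rfl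

/-- Polynomials, as elements of `Edom`. -/
def evE : Polynomial ℝ →ₗ[ℝ] Edom S₀ where
  toFun p := mkE S₀ (fun u => p.eval u)
    (let ⟨q, hq⟩ := poly_dominate p; ⟨q, fun u _ => hq u⟩)
  map_add' p q := Subtype.ext (funext fun u => by simp [mkE])
  map_smul' c p := Subtype.ext (funext fun u => by simp [mkE])

@[simp] lemma evE_coe (p : Polynomial ℝ) (u : ℝ) : (evE S₀ p : ℝ → ℝ) u = p.eval u := rfl

lemma evE_injective : Function.Injective (evE S₀) := by
  intro p q h
  apply Polynomial.funext
  intro u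
  have := congrArg (fun f : Edom S₀ => (f : ℝ → ℝ) u) h
  simpa using this

variable (m : ℕ → ℝ)

/-- The moment functional on polynomials, as a linear map. -/
noncomputable def momFun : Polynomial ℝ →ₗ[ℝ] ℝ where
  toFun p := p.sum fun n c => c * m n
  map_add' p q := Polynomial.sum_add_index p q _ (fun n => by simp) (fun n a b => by ring)
  map_smul' c p := by
    simp only [RingHom.id_apply, smul_eq_mul]
    rw [Polynomial.sum_smul_index p c _ (fun i => by simp)]
    simp only [Polynomial.sum_def, Finset.mul_sum]
    exact Finset.sum_congr rfl fun i _ => by ring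

end ShohatTamarkin

namespace Part2
open ShohatTamarkin
variable (S₀ : Set ℝ) (m : ℕ → ℝ)

lemma momFun_pow (n : ℕ) : momFun m (X ^ n) = m n := by
  unfold momFun
  simp only [LinearMap.coe_mk, AddHom.coe_mk]
  rw [← Polynomial.monomial_one_right_eq_X_pow]
  rw [Polynomial.sum_monomial_index]
  · simp
  · simp

lemma momFun_one (hm0 : m 0 = 1) : momFun m 1 = 1 := by
  have := momFun_pow m 0
  simpa [hm0] using this

/-- Riesz extension of the moment functional. -/
lemma exists_Lambda (hm0 : m 0 = 1) (hS₀ne : S₀.Nonempty)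
    (hpos : ∀ P : Polynomial ℝ, (∀ u ∈ S₀, 0 ≤ P.eval u) →
      0 ≤ P.sum (fun n c => c * m n)) :
    ∃ Λ : Edom S₀ →ₗ[ℝ] ℝ,
      (∀ p : Polynomial ℝ, Λ (evE S₀ p) = momFun m p) ∧
      (∀ f : Edom S₀, (∀ u ∈ S₀, 0 ≤ (f : ℝ → ℝ) u) → 0 ≤ Λ f) := by
  classical
  set cone : PointedCone ℝ (Edom S₀) :=
    { carrier := {f | ∀ u ∈ S₀, 0 ≤ (f : ℝ → ℝ) u}
      zero_mem' := fun u _ => le_rfl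
      smul_mem' := by
        rintro ⟨c, hc⟩ f hf u hu
        have : (↑((⟨c, hc⟩ : {c : ℝ // 0 ≤ c}) • f) : ℝ → ℝ) u = c * (f : ℝ → ℝ) u := rfl
        rw [this]
        exact mul_nonneg hc (hf u hu)
      add_mem' := by
        rintro f g hf hg u hu
        have : (↑(f + g) : ℝ → ℝ) u = (f : ℝ → ℝ) u + (g : ℝ → ℝ) u := rfl
        rw [this]
        exact add_nonneg (hf u hu) (hg u hu) }
  set e := LinearEquiv.ofInjective (evE S₀) (evE_injective S₀)
  set pf : Edom S₀ →ₗ.[ℝ] ℝ := ⟨LinearMap.range (evE S₀), (momFun m).comp e.symm.toLinearMap⟩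
  have hdom : pf.domain = LinearMap.range (evE S₀) := rfl
  obtain ⟨Λ, hΛext, hΛpos⟩ := riesz_extension cone pf
    (by
      rintro ⟨x, hx⟩ hxc
      obtain ⟨p, rfl⟩ := hx
      have hp : ∀ u ∈ S₀, 0 ≤ p.eval u := fun u hu => by
        have := hxc u hu
        simpa using this
      have h0 : 0 ≤ momFun m p := hpos p hp
      have : pf ⟨evE S₀ p, ⟨p, rfl⟩⟩ = momFun m p := by
        show ((momFun m).comp e.symm.toLinearMap) _ = _
        simp only [LinearMap.comp_apply, LinearEquiv.coe_coe]
        congr 1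
        have : e.symm ⟨evE S₀ p, ⟨p, rfl⟩⟩ = e.symm (e p) := by
          congr 1
        rw [this, LinearEquiv.symm_apply_apply]
      rw [this]
      exact h0)
    (by
      rintro y
      obtain ⟨q, hq⟩ := y.2
      refine ⟨⟨evE S₀ q, ⟨q, rfl⟩⟩, fun u hu => ?_⟩
      have : (↑(evE S₀ q + y) : ℝ → ℝ) u = q.eval u + (y : ℝ → ℝ) u := rfl
      rw [this]
      have := hq u hu
      have h1 := abs_le.1 this
      linarith [h1.1])
  refine ⟨Λ, fun p => ?_, fun f hf => hΛpos f hf⟩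
  have h1 := hΛext ⟨evE S₀ p, ⟨p, rfl⟩⟩
  have h2 : pf ⟨evE S₀ p, ⟨p, rfl⟩⟩ = momFun m p := by
    show ((momFun m).comp e.symm.toLinearMap) _ = _
    simp only [LinearMap.comp_apply, LinearEquiv.coe_coe]
    congr 1
    have : e.symm ⟨evE S₀ p, ⟨p, rfl⟩⟩ = e.symm (e p) := by congr 1
    rw [this, LinearEquiv.symm_apply_apply]
  rw [h2] at h1
  exact h1

end Part2

namespace Part3
open ShohatTamarkin Part2

variable {S₀ : Set ℝ} {m : ℕ → ℝ}

section
variable (S₀)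

/-- Indicator functions as elements of `Edom`. -/
noncomputable def indE (A : Set ℝ) : Edom S₀ :=
  mkE S₀ (A.indicator fun _ => 1)
    ⟨1, fun u _ => by by_cases h : u ∈ A <;> simp [Set.indicator_apply, h]⟩

/-- `u ^ n` cut off to `Ioc a b`, as an element of `Edom`. -/
noncomputable def pindE (n : ℕ) (a b : ℝ) : Edom S₀ :=
  mkE S₀ ((Set.Ioc a b).indicator fun u => u ^ n)
    ⟨1 + X ^ (2 * n), fun u _ => by
      have h2 : |u ^ n| ≤ 1 + u ^ (2 * n) := by
        have h1 : |u| ^ n ≤ 1 + (|u| ^ n) ^ 2 := by nlinarith [sq_nonneg (|u| ^ n - 1)]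
        calc |u ^ n| = |u| ^ n := abs_pow u n
          _ ≤ 1 + (|u| ^ n) ^ 2 := h1
          _ = 1 + u ^ (2 * n) := by rw [← pow_mul, mul_comm n 2, pow_mul, pow_mul, sq_abs]
      have h3 : (0:ℝ) ≤ 1 + u ^ (2 * n) := (abs_nonneg _).trans h2
      simp only [Polynomial.eval_add, Polynomial.eval_one, Polynomial.eval_pow,
        Polynomial.eval_X]
      by_cases h : u ∈ Set.Ioc a b
      · rw [Set.indicator_of_mem h]
        exact h2
      · rw [Set.indicator_of_notMem h]
        simpa using h3⟩

end

variable (Λ : Edom S₀ →ₗ[ℝ] ℝ)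
  (hΛpos : ∀ f : Edom S₀, (∀ u ∈ S₀, 0 ≤ (f : ℝ → ℝ) u) → 0 ≤ Λ f)

include hΛpos in
lemma lam_mono {f g : Edom S₀} (h : ∀ u ∈ S₀, (f : ℝ → ℝ) u ≤ (g : ℝ → ℝ) u) :
    Λ f ≤ Λ g := by
  have h0 := hΛpos (g - f) (fun u hu => by
    have he : ((g - f : Edom S₀) : ℝ → ℝ) u = (g : ℝ → ℝ) u - (f : ℝ → ℝ) u := rfl
    rw [he]
    linarith [h u hu])
  rw [map_sub] at h0
  linarith

/-- The pre-distribution function. -/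
noncomputable def Gf : ℝ → ℝ := fun t => Λ (indE S₀ (Set.Iic t))

include hΛpos in
lemma Gf_mono : Monotone (Gf Λ) := by
  intro s t hst
  refine lam_mono Λ hΛpos fun u _ => ?_
  by_cases h : u ≤ s
  · simp [indE, Set.indicator_apply, h, h.trans hst]
  · by_cases h2 : u ≤ t <;> simp [indE, Set.indicator_apply, h, h2]

lemma indE_split {a b c : ℝ} (hab : a ≤ b) (hbc : b ≤ c) :
    indE S₀ (Set.Ioc a c) = indE S₀ (Set.Ioc a b) + indE S₀ (Set.Ioc b c) := by
  apply Subtype.ext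
  funext u
  have he : ((indE S₀ (Set.Ioc a b) + indE S₀ (Set.Ioc b c) : Edom S₀) : ℝ → ℝ) u =
      (indE S₀ (Set.Ioc a b) : ℝ → ℝ) u + (indE S₀ (Set.Ioc b c) : ℝ → ℝ) u := rfl
  show ((indE S₀ (Set.Ioc a c) : Edom S₀) : ℝ → ℝ) u = _
  rw [he]
  simp only [indE, mkE_coe]
  by_cases h1 : u ∈ Set.Ioc a b
  · have hc : u ∈ Set.Ioc a c := ⟨h1.1, h1.2.trans hbc⟩
    have h2 : u ∉ Set.Ioc b c := fun h => absurd h1.2 (not_le.2 h.1)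
    rw [Set.indicator_of_mem hc, Set.indicator_of_mem h1, Set.indicator_of_notMem h2]
    norm_num
  · by_cases h2 : u ∈ Set.Ioc b c
    · have hc : u ∈ Set.Ioc a c := ⟨hab.trans_lt h2.1, h2.2⟩
      rw [Set.indicator_of_mem hc, Set.indicator_of_notMem h1, Set.indicator_of_mem h2]
      norm_num
    · have hc : u ∉ Set.Ioc a c := by
        intro h
        rcases le_or_gt u b with h3 | h3
        · exact h1 ⟨h.1, h3⟩
        · exact h2 ⟨h3, h.2⟩
      rw [Set.indicator_of_notMem hc, Set.indicator_of_notMem h1,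
        Set.indicator_of_notMem h2]
      norm_num

lemma lam_indE_Ioc {a b : ℝ} (hab : a ≤ b) :
    Λ (indE S₀ (Set.Ioc a b)) = Gf Λ b - Gf Λ a := by
  have h : indE S₀ (Set.Iic b) = indE S₀ (Set.Iic a) + indE S₀ (Set.Ioc a b) := by
    apply Subtype.ext
    funext u
    have he : ((indE S₀ (Set.Iic a) + indE S₀ (Set.Ioc a b) : Edom S₀) : ℝ → ℝ) u =
        (indE S₀ (Set.Iic a) : ℝ → ℝ) u + (indE S₀ (Set.Ioc a b) : ℝ → ℝ) u := rfl
    show ((indE S₀ (Set.Iic b) : Edom S₀) : ℝ → ℝ) u = _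
    rw [he]
    simp only [indE, mkE_coe]
    by_cases h1 : u ∈ Set.Iic a
    · have hb : u ∈ Set.Iic b := le_trans h1 hab
      have h2 : u ∉ Set.Ioc a b := fun h => absurd h1 (not_le.2 h.1)
      rw [Set.indicator_of_mem hb, Set.indicator_of_mem h1, Set.indicator_of_notMem h2]
      norm_num
    · by_cases h2 : u ∈ Set.Iic b
      · have hm : u ∈ Set.Ioc a b := ⟨lt_of_not_ge h1, h2⟩
        rw [Set.indicator_of_mem h2, Set.indicator_of_notMem h1, Set.indicator_of_mem hm]
        norm_num
      · have hm : u ∉ Set.Ioc a b := fun h => h2 h.2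
        rw [Set.indicator_of_notMem h2, Set.indicator_of_notMem h1,
          Set.indicator_of_notMem hm]
        norm_num
  have h4 := congrArg Λ h
  rw [map_add] at h4
  unfold Gf
  linarith

lemma pindE_split (n : ℕ) {a b c : ℝ} (hab : a ≤ b) (hbc : b ≤ c) :
    pindE S₀ n a c = pindE S₀ n a b + pindE S₀ n b c := by
  apply Subtype.ext
  funext u
  have he : ((pindE S₀ n a b + pindE S₀ n b c : Edom S₀) : ℝ → ℝ) u =
      (pindE S₀ n a b : ℝ → ℝ) u + (pindE S₀ n b c : ℝ → ℝ) u := rfl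
  show ((pindE S₀ n a c : Edom S₀) : ℝ → ℝ) u = _
  rw [he]
  simp only [pindE, mkE_coe]
  by_cases h1 : u ∈ Set.Ioc a b
  · have hc : u ∈ Set.Ioc a c := ⟨h1.1, h1.2.trans hbc⟩
    have h2 : u ∉ Set.Ioc b c := fun h => absurd h1.2 (not_le.2 h.1)
    rw [Set.indicator_of_mem hc, Set.indicator_of_mem h1, Set.indicator_of_notMem h2]
    ring
  · by_cases h2 : u ∈ Set.Ioc b c
    · have hc : u ∈ Set.Ioc a c := ⟨hab.trans_lt h2.1, h2.2⟩
      rw [Set.indicator_of_mem hc, Set.indicator_of_notMem h1, Set.indicator_of_mem h2]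
      ring
    · have hc : u ∉ Set.Ioc a c := by
        intro h
        rcases le_or_gt u b with h3 | h3
        · exact h1 ⟨h.1, h3⟩
        · exact h2 ⟨h3, h.2⟩
      rw [Set.indicator_of_notMem hc, Set.indicator_of_notMem h1,
        Set.indicator_of_notMem h2]
      ring

end Part3
namespace Part4
open ShohatTamarkin Part2 Part3

variable {S₀ : Set ℝ} {m : ℕ → ℝ}
variable (Λ : Edom S₀ →ₗ[ℝ] ℝ)
  (hΛpos : ∀ f : Edom S₀, (∀ u ∈ S₀, 0 ≤ (f : ℝ → ℝ) u) → 0 ≤ Λ f)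
  (hΛev : ∀ p : Polynomial ℝ, Λ (evE S₀ p) = momFun m p)
  (hm0 : m 0 = 1)

include hΛev hm0 in
lemma lam_one : Λ (evE S₀ 1) = 1 := by rw [hΛev, momFun_one m hm0]

include hΛev in
lemma lam_pow (n : ℕ) : Λ (evE S₀ (X ^ n)) = m n := by rw [hΛev, momFun_pow]

include hΛpos in
lemma lam_indE_nonneg (A : Set ℝ) : 0 ≤ Λ (indE S₀ A) := by
  refine hΛpos _ fun u _ => ?_
  simp only [indE, mkE_coe]
  by_cases h : u ∈ A <;> simp [Set.indicator_apply, h]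

include hΛpos in
lemma lam_pindE_le_pow (k : ℕ) (a b : ℝ) :
    Λ (pindE S₀ (2 * k) a b) ≤ Λ (evE S₀ (X ^ (2 * k))) := by
  refine lam_mono Λ hΛpos fun u _ => ?_
  simp only [pindE, mkE_coe, evE_coe, Polynomial.eval_pow, Polynomial.eval_X]
  have hnn : (0:ℝ) ≤ u ^ (2 * k) := by rw [mul_comm, pow_mul]; positivity
  by_cases h : u ∈ Set.Ioc a b
  · rw [Set.indicator_of_mem h]
  · rw [Set.indicator_of_notMem h]; exact hnn

include hΛpos in
lemma Gf_nonneg (t : ℝ) : 0 ≤ Gf Λ t := lam_indE_nonneg Λ hΛpos _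

include hΛpos hΛev hm0 in
lemma Gf_le_one (t : ℝ) : Gf Λ t ≤ 1 := by
  rw [← lam_one Λ hΛev hm0]
  refine lam_mono Λ hΛpos fun u _ => ?_
  simp only [indE, mkE_coe, evE_coe, Polynomial.eval_one]
  by_cases h : u ∈ Set.Iic t <;> simp [Set.indicator_apply, h]

include hΛpos hΛev in
lemma Gf_tail_bot {t : ℝ} (ht : t < 0) : Gf Λ t ≤ m 2 / t ^ 2 := by
  have h2 : Λ ((t ^ 2)⁻¹ • evE S₀ (X ^ 2)) = m 2 / t ^ 2 := by
    rw [_root_.map_smul, lam_pow Λ hΛev 2, smul_eq_mul]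
    ring
  rw [← h2]
  refine lam_mono Λ hΛpos fun u _ => ?_
  have htne : t ≠ 0 := ne_of_lt ht
  have ht2 : (0:ℝ) < t ^ 2 := by positivity
  have he : (((t ^ 2)⁻¹ • evE S₀ (X ^ 2) : Edom S₀) : ℝ → ℝ) u = (t ^ 2)⁻¹ * u ^ 2 := by
    have : (((t ^ 2)⁻¹ • evE S₀ (X ^ 2) : Edom S₀) : ℝ → ℝ) u
        = (t ^ 2)⁻¹ * (evE S₀ (X ^ 2) : ℝ → ℝ) u := rfl
    rw [this]; simp
  rw [he]
  simp only [indE, mkE_coe]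
  by_cases h : u ∈ Set.Iic t
  · rw [Set.indicator_of_mem h]
    have hut : u ≤ t := h
    have : t ^ 2 ≤ u ^ 2 := by nlinarith
    rw [le_inv_mul_iff₀ ht2]
    linarith
  · rw [Set.indicator_of_notMem h]
    positivity

include hΛpos hΛev hm0 in
lemma Gf_tail_top {t : ℝ} (ht : 0 < t) : 1 - m 2 / t ^ 2 ≤ Gf Λ t := by
  have h2 : Λ (evE S₀ 1 - (t ^ 2)⁻¹ • evE S₀ (X ^ 2)) = 1 - m 2 / t ^ 2 := by
    rw [map_sub, _root_.map_smul, lam_pow Λ hΛev 2, lam_one Λ hΛev hm0, smul_eq_mul]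
    ring
  rw [← h2]
  refine lam_mono Λ hΛpos fun u _ => ?_
  have ht2 : (0:ℝ) < t ^ 2 := by positivity
  have he : (((evE S₀ 1 - (t ^ 2)⁻¹ • evE S₀ (X ^ 2) : Edom S₀)) : ℝ → ℝ) u
      = 1 - (t ^ 2)⁻¹ * u ^ 2 := by
    have : (((evE S₀ 1 - (t ^ 2)⁻¹ • evE S₀ (X ^ 2) : Edom S₀)) : ℝ → ℝ) u
        = (evE S₀ 1 : ℝ → ℝ) u - (t ^ 2)⁻¹ * (evE S₀ (X ^ 2) : ℝ → ℝ) u := rfl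
    rw [this]; simp
  rw [he]
  simp only [Gf, indE, mkE_coe]
  by_cases h : u ∈ Set.Iic t
  · rw [Set.indicator_of_mem h]
    have : (0:ℝ) ≤ (t ^ 2)⁻¹ * u ^ 2 := by positivity
    linarith
  · rw [Set.indicator_of_notMem h]
    have hut : t < u := lt_of_not_ge h
    have : t ^ 2 ≤ u ^ 2 := by nlinarith
    have h3 : 1 ≤ (t ^ 2)⁻¹ * u ^ 2 := by
      rw [le_inv_mul_iff₀ ht2]; linarith
    linarith

include hΛpos hΛev in
lemma Gf_tendsto_bot : Filter.Tendsto (Gf Λ) Filter.atBot (nhds 0) := by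
  have hsq : Filter.Tendsto (fun t : ℝ => t ^ 2) Filter.atBot Filter.atTop := by
    have h1 := (tendsto_pow_atTop (two_ne_zero)).comp
      (tendsto_abs_atBot_atTop (G := ℝ))
    refine h1.congr fun t => ?_
    exact sq_abs t
  have hm2 : Filter.Tendsto (fun t : ℝ => m 2 / t ^ 2) Filter.atBot (nhds 0) :=
    Filter.Tendsto.div_atTop tendsto_const_nhds hsq
  refine tendsto_of_tendsto_of_tendsto_of_le_of_le' tendsto_const_nhds hm2
    (Filter.Eventually.of_forall fun t => Gf_nonneg Λ hΛpos t) ?_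
  filter_upwards [Filter.eventually_lt_atBot (0:ℝ)] with t ht
  exact Gf_tail_bot Λ hΛpos hΛev ht

include hΛpos hΛev hm0 in
lemma Gf_tendsto_top : Filter.Tendsto (Gf Λ) Filter.atTop (nhds 1) := by
  have hsq : Filter.Tendsto (fun t : ℝ => t ^ 2) Filter.atTop Filter.atTop :=
    tendsto_pow_atTop two_ne_zero
  have hm2 : Filter.Tendsto (fun t : ℝ => 1 - m 2 / t ^ 2) Filter.atTop (nhds 1) := by
    have := (Filter.Tendsto.div_atTop (tendsto_const_nhds (x := m 2)) hsq).const_sub 1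
    simpa using this
  refine tendsto_of_tendsto_of_tendsto_of_le_of_le' hm2 tendsto_const_nhds ?_
    (Filter.Eventually.of_forall fun t => Gf_le_one Λ hΛpos hΛev hm0 t)
  filter_upwards [Filter.eventually_gt_atTop (0:ℝ)] with t ht
  exact Gf_tail_top Λ hΛpos hΛev hm0 ht

/-- The right-continuous modification of `Gf` as a Stieltjes function. -/
noncomputable def Ffun : StieltjesFunction ℝ := (Gf_mono Λ hΛpos).stieltjesFunction

lemma Ffun_le {t s : ℝ} (hts : t < s) : Ffun Λ hΛpos t ≤ Gf Λ s :=
  (Gf_mono Λ hΛpos).rightLim_le hts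

lemma le_Ffun (t : ℝ) : Gf Λ t ≤ Ffun Λ hΛpos t :=
  (Gf_mono Λ hΛpos).le_rightLim le_rfl

include hΛev in
lemma Ffun_tendsto_bot : Filter.Tendsto (Ffun Λ hΛpos) Filter.atBot (nhds 0) := by
  refine tendsto_of_tendsto_of_tendsto_of_le_of_le'
    (Gf_tendsto_bot Λ hΛpos hΛev)
    ((Gf_tendsto_bot Λ hΛpos hΛev).comp (tendsto_atBot_add_const_right _ 1 tendsto_id))
    (Filter.Eventually.of_forall fun t => le_Ffun Λ hΛpos t)
    (Filter.Eventually.of_forall fun t => Ffun_le Λ hΛpos (lt_add_one t))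

include hΛev hm0 in
lemma Ffun_tendsto_top : Filter.Tendsto (Ffun Λ hΛpos) Filter.atTop (nhds 1) := by
  refine tendsto_of_tendsto_of_tendsto_of_le_of_le'
    (Gf_tendsto_top Λ hΛpos hΛev hm0)
    ((Gf_tendsto_top Λ hΛpos hΛev hm0).comp (tendsto_atTop_add_const_right _ 1 tendsto_id))
    (Filter.Eventually.of_forall fun t => le_Ffun Λ hΛpos t)
    (Filter.Eventually.of_forall fun t => Ffun_le Λ hΛpos (lt_add_one t))

include hΛev hm0 in
lemma Ffun_isProb : IsProbabilityMeasure (Ffun Λ hΛpos).measure :=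
  (Ffun Λ hΛpos).isProbabilityMeasure (Ffun_tendsto_bot Λ hΛpos hΛev)
    (Ffun_tendsto_top Λ hΛpos hΛev hm0)

lemma Ffun_eq_of_continuousAt {c : ℝ} (hc : ContinuousAt (Gf Λ) c) :
    Ffun Λ hΛpos c = Gf Λ c :=
  tendsto_nhds_unique ((Gf_mono Λ hΛpos).tendsto_rightLim c)
    (hc.tendsto.mono_left nhdsWithin_le_nhds)

include hΛpos in
lemma dense_contPts : Dense {x : ℝ | ContinuousAt (Gf Λ) x} := by
  have h := (Gf_mono Λ hΛpos).countable_not_continuousAt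
  have h2 := Set.Countable.dense_compl ℝ h
  convert h2 using 1
  ext x
  simp [Set.mem_compl_iff]

lemma measure_Ioc_cont {a b : ℝ} (hab : a ≤ b) (ha : ContinuousAt (Gf Λ) a)
    (hb : ContinuousAt (Gf Λ) b) :
    (Ffun Λ hΛpos).measure (Set.Ioc a b) = ENNReal.ofReal (Gf Λ b - Gf Λ a) := by
  rw [StieltjesFunction.measure_Ioc, Ffun_eq_of_continuousAt Λ hΛpos ha,
    Ffun_eq_of_continuousAt Λ hΛpos hb]

end Part4
namespace Part5
open ShohatTamarkin Part2 Part3 Part4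

variable {S₀ : Set ℝ} {m : ℕ → ℝ}
variable (Λ : Edom S₀ →ₗ[ℝ] ℝ)
  (hΛpos : ∀ f : Edom S₀, (∀ u ∈ S₀, 0 ≤ (f : ℝ → ℝ) u) → 0 ≤ Λ f)
  (hΛev : ∀ p : Polynomial ℝ, Λ (evE S₀ p) = momFun m p)
  (hm0 : m 0 = 1)

include hΛev hm0 in
lemma short_est (n : ℕ) {ε δ : ℝ} (hε : 0 < ε) (hδ : 0 < δ) {a b c d : ℝ}
    (hunif : ∀ x ∈ Set.Icc a b, ∀ y ∈ Set.Icc a b, dist x y < δ →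
      dist (x ^ n) (y ^ n) < ε)
    (hc : ContinuousAt (Gf Λ) c) (hd : ContinuousAt (Gf Λ) d)
    (hac : a ≤ c) (hcd : c ≤ d) (hdb : d ≤ b) (hshort : d - c ≤ δ / 2) :
    |(∫ u in Set.Ioc c d, u ^ n ∂(Ffun Λ hΛpos).measure) - Λ (pindE S₀ n c d)|
      ≤ 2 * ε * (Gf Λ d - Gf Λ c) := by
  haveI := Ffun_isProb Λ hΛpos hΛev hm0
  set ρ := (Ffun Λ hΛpos).measure with hρdef
  set w := Gf Λ d - Gf Λ c with hwdef
  have hw0 : 0 ≤ w := sub_nonneg.2 (Gf_mono Λ hΛpos hcd)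
  have hρt : (ρ (Set.Ioc c d)).toReal = w := by
    rw [hρdef, measure_Ioc_cont Λ hΛpos hcd hc hd, ENNReal.toReal_ofReal hw0]
  have hptw : ∀ u ∈ Set.Ioc c d, |u ^ n - d ^ n| ≤ ε := by
    intro u hu
    have hu1 : u ∈ Set.Icc a b := ⟨hac.trans hu.1.le, hu.2.trans hdb⟩
    have hd1 : d ∈ Set.Icc a b := ⟨hac.trans hcd, hdb⟩
    have hdist : dist u d < δ := by
      rw [Real.dist_eq, abs_of_nonpos (by linarith [hu.2])]
      have := hu.1
      linarith
    have := hunif u hu1 d hd1 hdist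
    rw [Real.dist_eq] at this
    exact this.le
  have hint : IntegrableOn (fun u : ℝ => u ^ n) (Set.Ioc c d) ρ :=
    (continuous_pow n).integrableOn_Ioc
  have hconst : ∀ C : ℝ, IntegrableOn (fun _ : ℝ => C) (Set.Ioc c d) ρ := fun C =>
    integrableOn_const (measure_ne_top _ _)
  have hIub : (∫ u in Set.Ioc c d, u ^ n ∂ρ) ≤ (d ^ n + ε) * w := by
    have h1 := setIntegral_mono_on hint (hconst (d ^ n + ε)) measurableSet_Ioc
      (fun u hu => by have := (abs_le.1 (hptw u hu)).2; linarith)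
    rwa [setIntegral_const, measureReal_def, hρt, smul_eq_mul, mul_comm] at h1
  have hIlb : (d ^ n - ε) * w ≤ ∫ u in Set.Ioc c d, u ^ n ∂ρ := by
    have h1 := setIntegral_mono_on (hconst (d ^ n - ε)) hint measurableSet_Ioc
      (fun u hu => by have := (abs_le.1 (hptw u hu)).1; linarith)
    rwa [setIntegral_const, measureReal_def, hρt, smul_eq_mul, mul_comm] at h1
  have hLub : Λ (pindE S₀ n c d) ≤ (d ^ n + ε) * w := by
    have h1 : Λ ((d ^ n + ε) • indE S₀ (Set.Ioc c d)) = (d ^ n + ε) * w := by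
      rw [_root_.map_smul, lam_indE_Ioc Λ hcd, smul_eq_mul, hwdef]
    rw [← h1]
    refine lam_mono Λ hΛpos fun u _ => ?_
    have he : (((d ^ n + ε) • indE S₀ (Set.Ioc c d) : Edom S₀) : ℝ → ℝ) u
        = (d ^ n + ε) * (indE S₀ (Set.Ioc c d) : ℝ → ℝ) u := rfl
    rw [he]
    simp only [pindE, indE, mkE_coe]
    by_cases h : u ∈ Set.Ioc c d
    · rw [Set.indicator_of_mem h, Set.indicator_of_mem h, mul_one]
      have := (abs_le.1 (hptw u h)).2
      linarith
    · rw [Set.indicator_of_notMem h, Set.indicator_of_notMem h, mul_zero]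
  have hLlb : (d ^ n - ε) * w ≤ Λ (pindE S₀ n c d) := by
    have h1 : Λ ((d ^ n - ε) • indE S₀ (Set.Ioc c d)) = (d ^ n - ε) * w := by
      rw [_root_.map_smul, lam_indE_Ioc Λ hcd, smul_eq_mul, hwdef]
    rw [← h1]
    refine lam_mono Λ hΛpos fun u _ => ?_
    have he : (((d ^ n - ε) • indE S₀ (Set.Ioc c d) : Edom S₀) : ℝ → ℝ) u
        = (d ^ n - ε) * (indE S₀ (Set.Ioc c d) : ℝ → ℝ) u := rfl
    rw [he]
    simp only [pindE, indE, mkE_coe]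
    by_cases h : u ∈ Set.Ioc c d
    · rw [Set.indicator_of_mem h, Set.indicator_of_mem h, mul_one]
      have := (abs_le.1 (hptw u h)).1
      linarith
    · rw [Set.indicator_of_notMem h, Set.indicator_of_notMem h, mul_zero]
  rw [abs_le]
  constructor <;> nlinarith [hIub, hIlb, hLub, hLlb]

include hΛev hm0 in
lemma interval_est (n : ℕ) {ε δ : ℝ} (hε : 0 < ε) (hδ : 0 < δ) {a b : ℝ}
    (hunif : ∀ x ∈ Set.Icc a b, ∀ y ∈ Set.Icc a b, dist x y < δ →
      dist (x ^ n) (y ^ n) < ε) :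
    ∀ k : ℕ, ∀ c d : ℝ, ContinuousAt (Gf Λ) c → ContinuousAt (Gf Λ) d →
      a ≤ c → c ≤ d → d ≤ b → d - c ≤ k * (δ / 4) →
      |(∫ u in Set.Ioc c d, u ^ n ∂(Ffun Λ hΛpos).measure) - Λ (pindE S₀ n c d)|
        ≤ 2 * ε * (Gf Λ d - Gf Λ c) := by
  haveI := Ffun_isProb Λ hΛpos hΛev hm0
  intro k
  induction k with
  | zero =>
    intro c d hc hd hac hcd hdb hlen
    have hcd' : c = d := le_antisymm hcd (by simpa using hlen)
    subst hcd'
    have h1 : Set.Ioc c c = (∅ : Set ℝ) := Set.Ioc_self c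
    have h2 : pindE S₀ n c c = 0 := by
      apply Subtype.ext
      funext u
      show (Set.Ioc c c).indicator (fun u => u ^ n) u = 0
      rw [h1]
      simp
    rw [h1, h2, map_zero]
    simp
  | succ k ih =>
    intro c d hc hd hac hcd hdb hlen
    rcases le_or_gt (d - c) (δ / 2) with hsh | hlong
    · exact short_est Λ hΛpos hΛev hm0 n hε hδ hunif hc hd hac hcd hdb hsh
    · obtain ⟨e, he_mem, he_lt⟩ := (dense_contPts Λ hΛpos).exists_between
        (show c + δ / 4 < c + δ / 2 by linarith)
      have hce : c ≤ e := by have := he_lt.1; linarith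
      have hed : e ≤ d := by have := he_lt.2; linarith
      have heb : e ≤ b := hed.trans hdb
      have h1 := short_est Λ hΛpos hΛev hm0 n hε hδ hunif hc he_mem hac hce heb
        (by have := he_lt.2; linarith)
      have hlen2 : d - e ≤ k * (δ / 4) := by
        have h3 := he_lt.1
        push_cast at hlen
        linarith
      have h2 := ih e d he_mem hd (hac.trans hce) hed hdb hlen2
      have hint1 : IntegrableOn (fun u : ℝ => u ^ n) (Set.Ioc c e)
          (Ffun Λ hΛpos).measure := (continuous_pow n).integrableOn_Ioc
      have hint2 : IntegrableOn (fun u : ℝ => u ^ n) (Set.Ioc e d)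
          (Ffun Λ hΛpos).measure := (continuous_pow n).integrableOn_Ioc
      have hI : (∫ u in Set.Ioc c d, u ^ n ∂(Ffun Λ hΛpos).measure)
          = (∫ u in Set.Ioc c e, u ^ n ∂(Ffun Λ hΛpos).measure)
            + ∫ u in Set.Ioc e d, u ^ n ∂(Ffun Λ hΛpos).measure := by
        rw [← Set.Ioc_union_Ioc_eq_Ioc hce hed,
          setIntegral_union (Set.Ioc_disjoint_Ioc_of_le le_rfl) measurableSet_Ioc hint1 hint2]
      have hL : Λ (pindE S₀ n c d) = Λ (pindE S₀ n c e) + Λ (pindE S₀ n e d) := by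
        rw [pindE_split n hce hed, map_add]
      have heq : (∫ u in Set.Ioc c d, u ^ n ∂(Ffun Λ hΛpos).measure) - Λ (pindE S₀ n c d)
          = ((∫ u in Set.Ioc c e, u ^ n ∂(Ffun Λ hΛpos).measure) - Λ (pindE S₀ n c e))
            + ((∫ u in Set.Ioc e d, u ^ n ∂(Ffun Λ hΛpos).measure) - Λ (pindE S₀ n e d)) := by
        rw [hI, hL]; ring
      rw [heq]
      refine (abs_add_le _ _).trans ?_
      have hfin : 2 * ε * (Gf Λ e - Gf Λ c) + 2 * ε * (Gf Λ d - Gf Λ e)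
          = 2 * ε * (Gf Λ d - Gf Λ c) := by ring
      linarith [h1, h2]

include hΛev hm0 in
lemma integral_Ioc_eq_lam (n : ℕ) {a b : ℝ} (hab : a ≤ b)
    (ha : ContinuousAt (Gf Λ) a) (hb : ContinuousAt (Gf Λ) b) :
    (∫ u in Set.Ioc a b, u ^ n ∂(Ffun Λ hΛpos).measure) = Λ (pindE S₀ n a b) := by
  have key : ∀ ε : ℝ, 0 < ε →
      |(∫ u in Set.Ioc a b, u ^ n ∂(Ffun Λ hΛpos).measure) - Λ (pindE S₀ n a b)|
        ≤ 2 * ε := by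
    intro ε hε
    have huc := (isCompact_Icc (a := a) (b := b)).uniformContinuousOn_of_continuous
      (continuous_pow n).continuousOn
    obtain ⟨δ, hδ, H⟩ := Metric.uniformContinuousOn_iff.1 huc ε hε
    set k := ⌈(b - a) / (δ / 4)⌉₊ with hk
    have hlen : b - a ≤ k * (δ / 4) := by
      have h1 := Nat.le_ceil ((b - a) / (δ / 4))
      have h2 : (0:ℝ) < δ / 4 := by linarith
      calc b - a = (b - a) / (δ / 4) * (δ / 4) := by field_simp
        _ ≤ k * (δ / 4) := by exact mul_le_mul_of_nonneg_right h1 h2.le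
    have h := interval_est Λ hΛpos hΛev hm0 n hε hδ H k a b ha hb le_rfl hab le_rfl hlen
    have hle1 : Gf Λ b - Gf Λ a ≤ 1 := by
      have := Gf_le_one Λ hΛpos hΛev hm0 b
      have := Gf_nonneg Λ hΛpos a
      linarith
    have hεnn : (0:ℝ) ≤ 2 * ε := by linarith
    calc |(∫ u in Set.Ioc a b, u ^ n ∂(Ffun Λ hΛpos).measure) - Λ (pindE S₀ n a b)|
        ≤ 2 * ε * (Gf Λ b - Gf Λ a) := h
      _ ≤ 2 * ε * 1 := by
          refine mul_le_mul_of_nonneg_left hle1 hεnn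
      _ = 2 * ε := by ring
  have h0 : |(∫ u in Set.Ioc a b, u ^ n ∂(Ffun Λ hΛpos).measure) - Λ (pindE S₀ n a b)|
      ≤ 0 := by
    by_contra hcon
    push_neg at hcon
    have := key (|(∫ u in Set.Ioc a b, u ^ n ∂(Ffun Λ hΛpos).measure)
      - Λ (pindE S₀ n a b)| / 4) (by linarith)
    linarith
  have := abs_nonpos_iff.1 h0
  linarith [sub_eq_zero.1 this]

end Part5
namespace Part6
open ShohatTamarkin Part2 Part3 Part4 Part5

variable {S₀ : Set ℝ} {m : ℕ → ℝ}
variable (Λ : Edom S₀ →ₗ[ℝ] ℝ)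
  (hΛpos : ∀ f : Edom S₀, (∀ u ∈ S₀, 0 ≤ (f : ℝ → ℝ) u) → 0 ≤ Λ f)
  (hΛev : ∀ p : Polynomial ℝ, Λ (evE S₀ p) = momFun m p)
  (hm0 : m 0 = 1)

include hΛpos in
lemma lam_indE_eq_zero {A : Set ℝ} (hA : A ∩ S₀ = ∅) : Λ (indE S₀ A) = 0 := by
  refine le_antisymm ?_ (lam_indE_nonneg Λ hΛpos A)
  have h := lam_mono Λ hΛpos (f := indE S₀ A) (g := 0) fun u hu => by
    have hnu : u ∉ A := fun hmem => by
      have : u ∈ A ∩ S₀ := ⟨hmem, hu⟩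
      rw [hA] at this
      exact this
    show (A.indicator (fun _ => (1:ℝ))) u ≤ (0 : Edom S₀).1 u
    rw [Set.indicator_of_notMem hnu]
    exact le_rfl
  simpa using h

include hΛpos in
lemma support_subset (hS₀closed : IsClosed S₀) :
    {x : ℝ | ∀ U ∈ nhds x, 0 < (Ffun Λ hΛpos).measure U} ⊆ S₀ := by
  intro x hx
  by_contra hxS
  obtain ⟨a, b, hxab, hab⟩ := mem_nhds_iff_exists_Ioo_subset.1
    (hS₀closed.isOpen_compl.mem_nhds hxS)
  have hab' : a < b := lt_trans hxab.1 hxab.2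
  -- G is constant on (a, b)
  have hconst : ∀ s t : ℝ, a < s → s ≤ t → t < b → Gf Λ t = Gf Λ s := by
    intro s t has hst htb
    have hint : Set.Ioc s t ∩ S₀ = ∅ := by
      apply Set.eq_empty_of_forall_notMem
      intro u hu
      exact hab ⟨has.trans hu.1.1, lt_of_le_of_lt hu.1.2 htb⟩ hu.2
    have h0 := lam_indE_eq_zero Λ hΛpos hint
    rw [lam_indE_Ioc Λ hst] at h0
    linarith
  set K := Gf Λ ((a + x) / 2) with hK
  have haK : a < (a + x) / 2 := by linarith [hxab.1]
  have hKb : (a + x) / 2 < b := by linarith [hxab.1, hxab.2]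
  have hGK : ∀ t ∈ Set.Ioo a b, Gf Λ t = K := by
    intro t ht
    rcases le_or_gt t ((a + x) / 2) with h | h
    · exact (hconst t ((a + x) / 2) ht.1 h hKb).symm
    · exact hconst ((a + x) / 2) t haK h.le ht.2
  have hFK : ∀ t ∈ Set.Ico a b, Ffun Λ hΛpos t = K := by
    intro t ht
    have hev : ∀ᶠ s in nhdsWithin t (Set.Ioi t), Gf Λ s = K := by
      filter_upwards [Ioo_mem_nhdsGT_of_mem (Set.mem_Ico.2 ⟨le_rfl, ht.2⟩)] with s hs
      exact hGK s ⟨lt_of_le_of_lt ht.1 hs.1, hs.2⟩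
    exact tendsto_nhds_unique ((Gf_mono Λ hΛpos).tendsto_rightLim t)
      (tendsto_nhds_of_eventually_eq hev)
  have hleft : Function.leftLim (Ffun Λ hΛpos) b = K := by
    have hev : ∀ᶠ s in nhdsWithin b (Set.Iio b), Ffun Λ hΛpos s = K := by
      filter_upwards [Ioo_mem_nhdsLT hab'] with s hs
      exact hFK s ⟨hs.1.le, hs.2⟩
    exact tendsto_nhds_unique ((Ffun Λ hΛpos).mono.tendsto_leftLim b)
      (tendsto_nhds_of_eventually_eq hev)
  have hmeas : (Ffun Λ hΛpos).measure (Set.Ioo a b) = 0 := by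
    rw [StieltjesFunction.measure_Ioo, hleft, hFK a ⟨le_rfl, hab'⟩]
    simp
  have := hx (Set.Ioo a b) (Ioo_mem_nhds hxab.1 hxab.2)
  rw [hmeas] at this
  exact lt_irrefl _ this

end Part6
namespace Part7
open ShohatTamarkin Part2 Part3 Part4 Part5 Part6

lemma abs_pow_le_aux (u : ℝ) (n : ℕ) : |u ^ n| ≤ 1 + u ^ (2 * n) := by
  have h1 : |u| ^ n ≤ 1 + (|u| ^ n) ^ 2 := by nlinarith [sq_nonneg (|u| ^ n - 1)]
  calc |u ^ n| = |u| ^ n := abs_pow u n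
    _ ≤ 1 + (|u| ^ n) ^ 2 := h1
    _ = 1 + u ^ (2 * n) := by rw [← pow_mul, mul_comm n 2, pow_mul, pow_mul, sq_abs]

variable {S₀ : Set ℝ} {m : ℕ → ℝ}
variable (Λ : Edom S₀ →ₗ[ℝ] ℝ)
  (hΛpos : ∀ f : Edom S₀, (∀ u ∈ S₀, 0 ≤ (f : ℝ → ℝ) u) → 0 ≤ Λ f)
  (hΛev : ∀ p : Polynomial ℝ, Λ (evE S₀ p) = momFun m p)
  (hm0 : m 0 = 1)

include hΛpos in
lemma exists_seqs : ∃ cs ds : ℕ → ℝ,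
    (∀ j, ContinuousAt (Gf Λ) (cs j)) ∧ (∀ j, ContinuousAt (Gf Λ) (ds j)) ∧
    (∀ j : ℕ, (j : ℝ) < cs j ∧ cs j < (j : ℝ) + 1) ∧
    (∀ j : ℕ, -(j : ℝ) - 1 < ds j ∧ ds j < -(j : ℝ)) := by
  have h1 : ∀ j : ℕ, ∃ x ∈ {x : ℝ | ContinuousAt (Gf Λ) x}, x ∈ Set.Ioo (j : ℝ) ((j : ℝ) + 1) :=
    fun j => (dense_contPts Λ hΛpos).exists_between (by linarith)
  have h2 : ∀ j : ℕ, ∃ x ∈ {x : ℝ | ContinuousAt (Gf Λ) x},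
      x ∈ Set.Ioo (-(j : ℝ) - 1) (-(j : ℝ)) := fun j =>
    (dense_contPts Λ hΛpos).exists_between (by linarith)
  choose cs hcs1 hcs2 using h1
  choose ds hds1 hds2 using h2
  exact ⟨cs, ds, hcs1, hds1, fun j => ⟨(hcs2 j).1, (hcs2 j).2⟩,
    fun j => ⟨(hds2 j).1, (hds2 j).2⟩⟩

end Part7
open ShohatTamarkin Part2 Part3 Part4 Part5 Part6 Part7 Polynomial in
/-- Sufficiency in the Shohat–Tamarkin theorem: if the moment functional
`μ(P) = ∑ xₙ mₙ` is non-negative on every polynomial non-negative on the nonempty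
closed set `S₀`, then `(mₙ)` is the moment sequence of a probability measure with
support contained in `S₀`. -/
theorem measure_of_moment_functional_nonneg
    (m : ℕ → ℝ) (hm0 : m 0 = 1)
    (S₀ : Set ℝ) (hS₀closed : IsClosed S₀) (hS₀ne : S₀.Nonempty)
    (hpos : ∀ P : Polynomial ℝ, (∀ u ∈ S₀, 0 ≤ P.eval u) →
      0 ≤ P.sum (fun n c => c * m n)) :
    ∃ ρ : Measure ℝ, IsProbabilityMeasure ρ ∧
      {x : ℝ | ∀ U ∈ nhds x, 0 < ρ U} ⊆ S₀ ∧
      (∀ n : ℕ, Integrable (fun u => u ^ n) ρ) ∧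
      (∀ n : ℕ, m n = ∫ u, u ^ n ∂ρ) := by
  classical
  obtain ⟨Λ, hΛev, hΛpos⟩ := exists_Lambda S₀ m hm0 hS₀ne hpos
  haveI hP : IsProbabilityMeasure (Ffun Λ hΛpos).measure :=
    Ffun_isProb Λ hΛpos hΛev hm0
  obtain ⟨cs, ds, hcsC, hdsC, hcs, hds⟩ := exists_seqs Λ hΛpos
  set ρ := (Ffun Λ hΛpos).measure with hρdef
  have hdc : ∀ j : ℕ, ds j ≤ cs j := fun j => by
    have h1 := (hds j).2; have h2 := (hcs j).1
    have h3 : (0:ℝ) ≤ (j:ℝ) := Nat.cast_nonneg j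
    linarith
  have hIoc : ∀ n j : ℕ,
      (∫ u in Set.Ioc (ds j) (cs j), u ^ n ∂ρ) = Λ (pindE S₀ n (ds j) (cs j)) :=
    fun n j => integral_Ioc_eq_lam Λ hΛpos hΛev hm0 n (hdc j) (hdsC j) (hcsC j)
  have hmem : ∀ u : ℝ, ∀ᶠ j : ℕ in Filter.atTop, u ∈ Set.Ioc (ds j) (cs j) := by
    intro u
    obtain ⟨j₀, hj₀⟩ := exists_nat_gt |u|
    rw [Filter.eventually_atTop]
    refine ⟨j₀, fun j hj => ?_⟩
    have h1 : |u| < (j:ℝ) := lt_of_lt_of_le hj₀ (by exact_mod_cast hj)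
    have h2 := abs_lt.1 h1
    exact ⟨by linarith [(hds j).2], by linarith [(hcs j).1]⟩
  -- integrability of even powers
  have hInt_even : ∀ k : ℕ, Integrable (fun u : ℝ => u ^ (2 * k)) ρ := by
    intro k
    have hnn : ∀ u : ℝ, 0 ≤ u ^ (2 * k) := fun u => (even_two_mul k).pow_nonneg u
    have heint : ∀ j : ℕ, (∫ u in Set.Ioc (ds j) (cs j), u ^ (2 * k) ∂ρ) ≤ m (2 * k) :=
      fun j => by
        rw [hIoc (2 * k) j]
        exact le_of_le_of_eq (lam_pindE_le_pow Λ hΛpos k (ds j) (cs j))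
          (lam_pow Λ hΛev (2 * k))
    set g : ℝ → ℝ≥0∞ := fun u => ENNReal.ofReal (u ^ (2 * k)) with hg
    set Fj : ℕ → ℝ → ℝ≥0∞ := fun j => (Set.Ioc (ds j) (cs j)).indicator g with hFj
    have hmeasg : Measurable g := (continuous_pow (2 * k)).measurable.ennreal_ofReal
    have hFmeas : ∀ j, Measurable (Fj j) := fun j => hmeasg.indicator measurableSet_Ioc
    have hsub : ∀ j : ℕ, Set.Ioc (ds j) (cs j) ⊆ Set.Ioc (ds (j + 1)) (cs (j + 1)) := by
      intro j u hu
      have h1 := (hds (j + 1)).2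
      have h2 := (hds j).1
      have h3 := (hcs (j + 1)).1
      have h4 := (hcs j).2
      push_cast at h1 h2 h3 h4
      exact ⟨by linarith [hu.1], by linarith [hu.2]⟩
    have hFmono : Monotone Fj := monotone_nat_of_le_succ fun j u => by
      by_cases h : u ∈ Set.Ioc (ds j) (cs j)
      · simp only [hFj]
        rw [Set.indicator_of_mem h, Set.indicator_of_mem (hsub j h)]
      · simp only [hFj]
        rw [Set.indicator_of_notMem h]
        exact zero_le
    have hFsup : ∀ u, (⨆ j, Fj j u) = g u := by
      intro u
      apply le_antisymm
      · refine iSup_le fun j => ?_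
        by_cases h : u ∈ Set.Ioc (ds j) (cs j)
        · simp only [hFj]; rw [Set.indicator_of_mem h]
        · simp only [hFj]; rw [Set.indicator_of_notMem h]; exact zero_le
      · obtain ⟨j₀, hj₀⟩ := (hmem u).exists
        refine le_iSup_of_le j₀ ?_
        simp only [hFj]
        rw [Set.indicator_of_mem hj₀]
    have hFle : ∀ j, (∫⁻ u, Fj j u ∂ρ) ≤ ENNReal.ofReal (m (2 * k)) := by
      intro j
      simp only [hFj]
      rw [lintegral_indicator measurableSet_Ioc]
      have hOn : IntegrableOn (fun u : ℝ => u ^ (2 * k)) (Set.Ioc (ds j) (cs j)) ρ :=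
        (continuous_pow (2 * k)).integrableOn_Ioc
      simp only [hg]
      rw [← ofReal_integral_eq_lintegral_ofReal hOn
        (Filter.Eventually.of_forall fun u => hnn u)]
      exact ENNReal.ofReal_le_ofReal (heint j)
    have hglt : (∫⁻ u, g u ∂ρ) < ⊤ := by
      have h1 : (fun u => g u) = fun u => ⨆ j, Fj j u := funext fun u => (hFsup u).symm
      calc (∫⁻ u, g u ∂ρ) = ⨆ j, ∫⁻ u, Fj j u ∂ρ := by
            rw [h1, lintegral_iSup hFmeas hFmono]
        _ ≤ ENNReal.ofReal (m (2 * k)) := iSup_le hFle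
        _ < ⊤ := ENNReal.ofReal_lt_top
    refine ⟨(continuous_pow (2 * k)).aestronglyMeasurable, ?_⟩
    rw [hasFiniteIntegral_iff_ofReal (Filter.Eventually.of_forall fun u => hnn u)]
    exact hglt
  -- integrability of all powers
  have hInt : ∀ n : ℕ, Integrable (fun u : ℝ => u ^ n) ρ := by
    intro n
    have hInt2n : Integrable (fun u : ℝ => 1 + u ^ (2 * n)) ρ :=
      (integrable_const 1).add (hInt_even n)
    refine Integrable.mono hInt2n (continuous_pow n).aestronglyMeasurable
      (Filter.Eventually.of_forall fun u => ?_)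
    have h1 := abs_pow_le_aux u n
    have h2 : (0:ℝ) ≤ 1 + u ^ (2 * n) := le_trans (abs_nonneg _) h1
    rw [Real.norm_eq_abs, Real.norm_eq_abs, abs_of_nonneg h2]
    exact h1
  refine ⟨ρ, hP, support_subset Λ hΛpos hS₀closed, hInt, ?_⟩
  -- the moments
  intro n
  set A : ℕ → ℝ := fun j => Λ (pindE S₀ n (ds j) (cs j)) with hA
  have hInt2n : Integrable (fun u : ℝ => 1 + u ^ (2 * n)) ρ :=
    (integrable_const 1).add (hInt_even n)
  have hnn2 : ∀ u : ℝ, (0:ℝ) ≤ 1 + u ^ (2 * n) := fun u =>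
    le_trans (abs_nonneg _) (abs_pow_le_aux u n)
  have hlim1 : Filter.Tendsto A Filter.atTop (nhds (∫ u, u ^ n ∂ρ)) := by
    have h1 : ∀ j, A j = ∫ u, (Set.Ioc (ds j) (cs j)).indicator (fun u => u ^ n) u ∂ρ := by
      intro j
      rw [integral_indicator measurableSet_Ioc, hIoc n j]
    have h2 := MeasureTheory.tendsto_integral_of_dominated_convergence (μ := ρ)
      (F := fun j u => (Set.Ioc (ds j) (cs j)).indicator (fun u => u ^ n) u)
      (f := fun u => u ^ n) (fun u => 1 + u ^ (2 * n))
      (fun j => ((continuous_pow n).aestronglyMeasurable).indicator measurableSet_Ioc)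
      hInt2n
      (fun j => Filter.Eventually.of_forall fun u => by
        show ‖(Set.Ioc (ds j) (cs j)).indicator (fun u => u ^ n) u‖ ≤ 1 + u ^ (2 * n)
        by_cases h : u ∈ Set.Ioc (ds j) (cs j)
        · rw [Set.indicator_of_mem h, Real.norm_eq_abs]
          exact abs_pow_le_aux u n
        · rw [Set.indicator_of_notMem h]
          simpa using hnn2 u)
      (Filter.Eventually.of_forall fun u => by
        refine tendsto_nhds_of_eventually_eq ?_
        filter_upwards [hmem u] with j hj
        rw [Set.indicator_of_mem hj])
    exact Filter.Tendsto.congr (fun j => (h1 j).symm) h2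
  have hlim2 : Filter.Tendsto A Filter.atTop (nhds (m n)) := by
    have hb : Filter.Tendsto (fun j : ℕ => m (2 * n + 2) / (j : ℝ) ^ (n + 2))
        Filter.atTop (nhds 0) :=
      Filter.Tendsto.div_atTop tendsto_const_nhds
        ((tendsto_pow_atTop (Nat.succ_ne_zero (n + 1))).comp tendsto_natCast_atTop_atTop)
    have hest : ∀ j : ℕ, 1 ≤ j → |A j - m n| ≤ m (2 * n + 2) / (j : ℝ) ^ (n + 2) := by
      intro j hj1
      have hjR : (1:ℝ) ≤ (j:ℝ) := by exact_mod_cast hj1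
      have hjpos : (0:ℝ) < (j:ℝ) ^ (n + 2) := by positivity
      set iv : ℝ := ((j:ℝ) ^ (n + 2))⁻¹ with hiv
      have hivnn : 0 ≤ iv := inv_nonneg.2 hjpos.le
      have hevn : Even (2 * n + 2) := ⟨n + 1, by ring⟩
      have hcoe : ∀ u : ℝ, ((evE S₀ (X ^ n) - pindE S₀ n (ds j) (cs j) : Edom S₀) : ℝ → ℝ) u
          = u ^ n - (Set.Ioc (ds j) (cs j)).indicator (fun u => u ^ n) u := by
        intro u
        have h0 : ((evE S₀ (X ^ n) - pindE S₀ n (ds j) (cs j) : Edom S₀) : ℝ → ℝ) u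
            = (evE S₀ (X ^ n) : ℝ → ℝ) u - (pindE S₀ n (ds j) (cs j) : ℝ → ℝ) u := rfl
        rw [h0]
        simp [pindE]
      have hout : ∀ u : ℝ, u ∉ Set.Ioc (ds j) (cs j) → (j:ℝ) ≤ |u| := by
        intro u hu
        have hjnn : (0:ℝ) ≤ (j:ℝ) := Nat.cast_nonneg j
        by_cases h1 : u ≤ ds j
        · have h2 := (hds j).2
          rw [abs_of_nonpos (by linarith)]
          linarith
        · have h2 : cs j < u := by
            rw [Set.mem_Ioc] at hu
            push_neg at hu
            exact hu (lt_of_not_ge h1)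
          have h3 := (hcs j).1
          rw [abs_of_pos (by linarith)]
          linarith
      have hkey : ∀ u : ℝ, u ∉ Set.Ioc (ds j) (cs j) → |u ^ n| ≤ iv * u ^ (2 * n + 2) := by
        intro u hu
        have hju := hout u hu
        have habs : |u| ^ (n + 2) * |u| ^ n = u ^ (2 * n + 2) := by
          rw [← pow_add]
          have h5 : |u| ^ (n + 2 + n) = |u ^ (n + 2 + n)| := (abs_pow u _).symm
          have h6 : Even (n + 2 + n) := ⟨n + 1, by ring⟩
          rw [h5, abs_of_nonneg (h6.pow_nonneg u)]
          congr 1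
          ring
        have hpow : (j:ℝ) ^ (n + 2) ≤ |u| ^ (n + 2) :=
          pow_le_pow_left₀ (by linarith) hju _
        rw [hiv, le_inv_mul_iff₀ hjpos]
        calc (j:ℝ) ^ (n + 2) * |u ^ n| ≤ |u| ^ (n + 2) * |u ^ n| :=
              mul_le_mul_of_nonneg_right hpow (abs_nonneg _)
          _ = |u| ^ (n + 2) * |u| ^ n := by rw [abs_pow]
          _ = u ^ (2 * n + 2) := habs
      have hsmulcoe : ∀ u : ℝ, ((iv • evE S₀ (X ^ (2 * n + 2)) : Edom S₀) : ℝ → ℝ) u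
          = iv * u ^ (2 * n + 2) := by
        intro u
        have h0 : ((iv • evE S₀ (X ^ (2 * n + 2)) : Edom S₀) : ℝ → ℝ) u
            = iv * (evE S₀ (X ^ (2 * n + 2)) : ℝ → ℝ) u := rfl
        rw [h0]
        simp
      have hub : Λ (evE S₀ (X ^ n) - pindE S₀ n (ds j) (cs j)) ≤ iv * m (2 * n + 2) := by
        have h1 : Λ (iv • evE S₀ (X ^ (2 * n + 2))) = iv * m (2 * n + 2) := by
          rw [_root_.map_smul, lam_pow Λ hΛev, smul_eq_mul]
        rw [← h1]
        refine lam_mono Λ hΛpos fun u _ => ?_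
        rw [hcoe u, hsmulcoe u]
        by_cases h : u ∈ Set.Ioc (ds j) (cs j)
        · rw [Set.indicator_of_mem h, sub_self]
          exact mul_nonneg hivnn (hevn.pow_nonneg u)
        · rw [Set.indicator_of_notMem h, sub_zero]
          exact le_trans (le_abs_self _) (hkey u h)
      have hlb : -(iv * m (2 * n + 2)) ≤ Λ (evE S₀ (X ^ n) - pindE S₀ n (ds j) (cs j)) := by
        have h1 : Λ (-(iv • evE S₀ (X ^ (2 * n + 2)))) = -(iv * m (2 * n + 2)) := by
          rw [map_neg, _root_.map_smul, lam_pow Λ hΛev, smul_eq_mul]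
        rw [← h1]
        refine lam_mono Λ hΛpos fun u _ => ?_
        have hnegcoe : ((-(iv • evE S₀ (X ^ (2 * n + 2))) : Edom S₀) : ℝ → ℝ) u
            = -(iv * u ^ (2 * n + 2)) := by
          have h0 : ((-(iv • evE S₀ (X ^ (2 * n + 2))) : Edom S₀) : ℝ → ℝ) u
              = -(((iv • evE S₀ (X ^ (2 * n + 2)) : Edom S₀) : ℝ → ℝ) u) := rfl
          rw [h0, hsmulcoe u]
        rw [hcoe u, hnegcoe]
        by_cases h : u ∈ Set.Ioc (ds j) (cs j)
        · rw [Set.indicator_of_mem h, sub_self]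
          have := mul_nonneg hivnn (hevn.pow_nonneg u)
          linarith
        · rw [Set.indicator_of_notMem h, sub_zero]
          have h4 := hkey u h
          have h5 := neg_abs_le (u ^ n)
          linarith
      have hAj : A j = m n - Λ (evE S₀ (X ^ n) - pindE S₀ n (ds j) (cs j)) := by
        rw [map_sub, lam_pow Λ hΛev, hA]
        ring
      have hdiv : iv * m (2 * n + 2) = m (2 * n + 2) / (j:ℝ) ^ (n + 2) := by
        rw [hiv, div_eq_inv_mul]
      rw [hAj]
      have h6 : m n - Λ (evE S₀ (X ^ n) - pindE S₀ n (ds j) (cs j)) - m n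
          = -(Λ (evE S₀ (X ^ n) - pindE S₀ n (ds j) (cs j))) := by ring
      rw [h6, abs_neg, ← hdiv, abs_le]
      exact ⟨by linarith, hub⟩
    refine tendsto_of_tendsto_of_tendsto_of_le_of_le'
      (f := A) (g := fun j : ℕ => m n - m (2 * n + 2) / (j : ℝ) ^ (n + 2))
      (h := fun j : ℕ => m n + m (2 * n + 2) / (j : ℝ) ^ (n + 2)) ?_ ?_ ?_ ?_
    · simpa using tendsto_const_nhds.sub hb
    · simpa using tendsto_const_nhds.add hb
    · filter_upwards [Filter.eventually_ge_atTop 1] with j hj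
      have := (abs_le.1 (hest j hj)).1
      linarith
    · filter_upwards [Filter.eventually_ge_atTop 1] with j hj
      have := (abs_le.1 (hest j hj)).2
      linarith
  exact tendsto_nhds_unique hlim2 hlim1
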